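/- Dhar decomposition: Let d be a divisor on a connected weightless loopless multigraph G and let V₀ ⊆ V be a set of vertices such that d(v) ≥ 0 for all v ∉ V₀. Then the Dhar sequence V₀ ⊆ V₁ ⊆ V₂ ⊆ … stabilizes, i.e., there exists n with V_{n+1} = V_n; and for any such n, the divisor d − t_{V_n} is linearly equivalent to d and satisfies (d − t_{V_n})(v) ≥ 0 for all v ∉ V₀. -/

import Mathlib

open Finset

section Preliminaries

variable {V : Type} [Fintype V] [DecidableEq V]

/-- The degree of a divisor on a graph with vertex set `V`. -/
def degDiv (d : V → ℤ) : ℤ := ∑ v, d v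

/-- A divisor is effective if it is nonnegative at every vertex. -/
def Effective (d : V → ℤ) : Prop := ∀ v, 0 ≤ d v

/-- The principal divisor `t_Z` associated to a subset `Z` of vertices, for the
graph with edge multiplicity function `m`. -/
def tZ (m : V → V → ℕ) (Z : Finset V) : V → ℤ := fun v =>
  if v ∈ Z then -(∑ u ∈ Zᶜ, (m v u : ℤ)) else ∑ u ∈ Z, (m v u : ℤ)

/-- Two divisors are linearly equivalent if their difference lies in the subgroup
generated by the divisors `t_Z`. -/
def LinEquiv (m : V → V → ℕ) (d d' : V → ℤ) : Prop :=
  d - d' ∈ AddSubgroup.closure (Set.range (tZ m))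

/-- The simple graph associated to an edge multiplicity function `m`
(an edge between distinct `u`, `v` whenever `m u v > 0`; loops are discarded). -/
def assocGraph (m : V → V → ℕ) : SimpleGraph V where
  Adj u v := u ≠ v ∧ (0 < m u v ∨ 0 < m v u)
  symm := ⟨fun _ _ h => ⟨h.1.symm, h.2.symm⟩⟩
  loopless := ⟨fun _ h => h.1 rfl⟩

end Preliminaries

section Dhar

variable {V : Type} [Fintype V] [DecidableEq V]

/-- One step of the Dhar algorithm: add to `S` all vertices `v ∉ S` with
`∑_{u ∈ S} m v u > d v`. -/
def dharStep (m : V → V → ℕ) (d : V → ℤ) (S : Finset V) : Finset V :=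
  S ∪ (Sᶜ.filter fun v => d v < ∑ u ∈ S, (m v u : ℤ))

/-- The Dhar sequence `V₀ ⊆ V₁ ⊆ V₂ ⊆ …` starting from `V₀`. -/
def dharSeq (m : V → V → ℕ) (d : V → ℤ) (V0 : Finset V) : ℕ → Finset V
  | 0 => V0
  | n + 1 => dharStep m d (dharSeq m d V0 n)

end Dhar

/-- **Dhar decomposition.** The Dhar sequence stabilizes, and at any stable stage
`V_n` the divisor `d - t_(V_n)` is linearly equivalent to `d` and effective away
from `V₀`. -/
theorem dhar_decomposition {V : Type} [Fintype V] [DecidableEq V]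
    (m : V → V → ℕ) (hsymm : ∀ u v, m u v = m v u) (hloop : ∀ v, m v v = 0)
    (hconn : (assocGraph m).Connected)
    (d : V → ℤ) (V0 : Finset V) (hd : ∀ v, v ∉ V0 → 0 ≤ d v) :
    (∃ n, dharSeq m d V0 (n + 1) = dharSeq m d V0 n) ∧
      ∀ n, dharSeq m d V0 (n + 1) = dharSeq m d V0 n →
        LinEquiv m (d - tZ m (dharSeq m d V0 n)) d ∧
          ∀ v, v ∉ V0 → 0 ≤ (d - tZ m (dharSeq m d V0 n)) v := by
  constructor
  · by_contra h
    push_neg at h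
    have hcard : ∀ n, n ≤ (dharSeq m d V0 n).card := by
      intro n
      induction n with
      | zero => exact Nat.zero_le _
      | succ k ih =>
        have hss : dharSeq m d V0 k ⊂ dharSeq m d V0 (k + 1) :=
          ⟨Finset.subset_union_left, fun hsub =>
            h k (Finset.Subset.antisymm hsub Finset.subset_union_left)⟩
        exact Nat.succ_le_of_lt (lt_of_le_of_lt ih (Finset.card_lt_card hss))
    have := hcard (Fintype.card V + 1)
    have hle := Finset.card_le_univ (dharSeq m d V0 (Fintype.card V + 1))
    omega
  · intro n hn
    constructor
    · have : (d - tZ m (dharSeq m d V0 n)) - d = -(tZ m (dharSeq m d V0 n)) := by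
        abel
      unfold LinEquiv
      rw [this]
      exact neg_mem (AddSubgroup.subset_closure ⟨dharSeq m d V0 n, rfl⟩)
    · intro v hv
      set S := dharSeq m d V0 n with hS
      by_cases hvS : v ∈ S
      · simp only [Pi.sub_apply, tZ, if_pos hvS, sub_neg_eq_add]
        have : (0:ℤ) ≤ ∑ u ∈ Sᶜ, (m v u : ℤ) :=
          Finset.sum_nonneg fun u _ => Int.natCast_nonneg _
        linarith [hd v hv]
      · simp only [Pi.sub_apply, tZ, if_neg hvS]
        by_contra hlt
        push_neg at hlt
        have hvfil : v ∈ Sᶜ.filter fun w => d w < ∑ u ∈ S, (m w u : ℤ) := by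
          simp [Finset.mem_filter, hvS]
          linarith
        have : v ∈ dharSeq m d V0 (n + 1) := by
          simp only [dharSeq, dharStep]
          exact Finset.mem_union_right _ hvfil
        rw [hn] at this
        exact hvS this
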